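/- If equality ‖(A-a)u‖·‖(B-b)u‖ = (1/2)·|⟨(AB-BA)u, u⟩| holds with both factors nonzero, then (A-a)u and (B-b)u are proportional by a purely imaginary scalar, i.e., there exists r ∈ ℝ, r ≠ 0, with (A-a)u = i·r·(B-b)u. -/

import Mathlib

open scoped ComplexInnerProductSpace

theorem proportional_of_uncertainty_equality
    {H : Type*} [NormedAddCommGroup H] [InnerProductSpace ℂ H] [CompleteSpace H]
    (A B : H →L[ℂ] H) (hA : IsSelfAdjoint A) (hB : IsSelfAdjoint B)
    (a b : ℝ) (u : H)
    (hAu : (A - (a : ℂ) • 1) u ≠ 0) (hBu : (B - (b : ℂ) • 1) u ≠ 0)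
    (heq : ‖(A - (a : ℂ) • 1) u‖ * ‖(B - (b : ℂ) • 1) u‖ =
      (1 / 2) * ‖⟪(A ∘L B - B ∘L A) u, u⟫‖) :
    ∃ r : ℝ, r ≠ 0 ∧ (A - (a : ℂ) • 1) u = ((Complex.I * r) : ℂ) • (B - (b : ℂ) • 1) u := by
  set f := (A - (a : ℂ) • 1) u with hf
  set g := (B - (b : ℂ) • 1) u with hg
  set z := ⟪g, f⟫ with hz
  have hAsym : ∀ x y : H, ⟪A x, y⟫ = ⟪x, A y⟫ := fun x y => hA.isSymmetric x y
  have hBsym : ∀ x y : H, ⟪B x, y⟫ = ⟪x, B y⟫ := fun x y => hB.isSymmetric x y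
  -- commutator inner product equals z - conj z
  have hcomm : ⟪(A ∘L B - B ∘L A) u, u⟫ = z - (starRingEnd ℂ) z := by
    rw [hz, inner_conj_symm]
    simp only [hf, hg, ContinuousLinearMap.sub_apply, ContinuousLinearMap.comp_apply,
      ContinuousLinearMap.smul_apply, ContinuousLinearMap.one_apply,
      inner_sub_left, inner_sub_right, inner_smul_left, inner_smul_right,
      Complex.conj_ofReal, map_sub, map_mul, inner_conj_symm]
    rw [hAsym (B u) u, hBsym (A u) u, hAsym u u, hBsym u u]
    ring
  have himabs : ‖⟪(A ∘L B - B ∘L A) u, u⟫‖ = 2 * |z.im| := by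
    rw [hcomm, Complex.sub_conj]
    rw [norm_mul, Complex.norm_I, Complex.norm_real, Real.norm_eq_abs, abs_mul]
    simp
  rw [himabs] at heq
  have heq' : ‖f‖ * ‖g‖ = |z.im| := by rw [heq]; ring
  -- Cauchy–Schwarz chain
  have hcs : ‖z‖ ≤ ‖g‖ * ‖f‖ := norm_inner_le_norm g f
  have him_le : |z.im| ≤ ‖z‖ := Complex.abs_im_le_norm z
  have hnorm : ‖z‖ = ‖g‖ * ‖f‖ := le_antisymm hcs (by
    calc ‖g‖ * ‖f‖ = |z.im| := by rw [← heq']; ring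
    _ ≤ ‖z‖ := him_le)
  have himeq : |z.im| = ‖z‖ := le_antisymm him_le (by
    rw [hnorm, ← heq']; ring_nf; exact le_refl _)
  -- z has zero real part
  have hre : z.re = 0 := by
    have h3 : |z.im| ^ 2 = ‖z‖ ^ 2 := by rw [himeq]
    rw [sq_abs, Complex.sq_norm, Complex.normSq_apply] at h3
    nlinarith [sq_nonneg z.re]
  -- equality in Cauchy–Schwarz gives proportionality
  obtain ⟨c, hc0, hcf⟩ := (norm_inner_eq_norm_iff (𝕜 := ℂ) hBu hAu).mp hnorm
  have hzc : z = c * (‖g‖ : ℂ) ^ 2 := by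
    rw [hz, hcf, inner_smul_right, inner_self_eq_norm_sq_to_K]
    rfl
  have hcre : c.re = 0 := by
    have hz2 : z.re = c.re * ‖g‖ ^ 2 := by
      rw [hzc]; simp [Complex.mul_re, pow_two]
    have hg0 : ‖g‖ ≠ 0 := norm_ne_zero_iff.mpr hBu
    have h0 : c.re * ‖g‖ ^ 2 = 0 := by rw [← hz2, hre]
    rcases mul_eq_zero.mp h0 with h | h
    · exact h
    · exact absurd (pow_eq_zero_iff two_ne_zero |>.mp h) hg0
  refine ⟨c.im, fun h => hc0 (Complex.ext hcre h), ?_⟩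
  have : (Complex.I * (c.im : ℂ)) = c := by
    apply Complex.ext <;> simp [hcre]
  rw [this]
  exact hcf
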